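/- arXiv:1503.05186 — 2 statements merged into one kernel-verified Lean document; each statement's English description precedes it below -/
import Mathlib

section
/- Consider a process on partitions of a finite set V of size n ≥ m, starting from the partition into singletons, in which at each step exactly two parts are merged into one. If the process reaches a partition containing a part of size at least m (with 1 ≤ m ≤ n), then at some step there was a part of size s with m ≤ s ≤ 2m. -/
theorem aizenman_lebowitz_partitions (n m T : ℕ) (hm : 1 ≤ m) (hmn : m ≤ n)
    (P : ℕ → Finset (Finset (Fin n)))
    (h0 : P 0 = Finset.univ.image fun v => {v})
    (hstep : ∀ t < T, ∃ a ∈ P t, ∃ b ∈ P t, a ≠ b ∧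
      P (t + 1) = insert (a ∪ b) (((P t).erase a).erase b))
    (hbig : ∃ t ≤ T, ∃ C ∈ P t, m ≤ C.card) :
    ∃ t ≤ T, ∃ C ∈ P t, m ≤ C.card ∧ C.card ≤ 2 * m := by
  classical
  have hQ : ∃ t, t ≤ T ∧ ∃ C ∈ P t, m ≤ C.card := by
    obtain ⟨t, ht, hC⟩ := hbig; exact ⟨t, ht, hC⟩
  obtain ⟨ht₀T, C, hCP, hCm⟩ := Nat.find_spec hQ
  have hmin : ∀ s < Nat.find hQ, ¬ (s ≤ T ∧ ∃ C ∈ P s, m ≤ C.card) := fun s hs => Nat.find_min hQ hs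
  generalize hgen : Nat.find hQ = t₀ at ht₀T hCP hmin
  refine ⟨t₀, ht₀T, C, hCP, hCm, ?_⟩
  rcases Nat.eq_zero_or_pos t₀ with h0' | hpos
  · rw [h0', h0] at hCP
    obtain ⟨v, _, hv⟩ := Finset.mem_image.mp hCP
    have : C.card = 1 := by rw [← hv]; simp
    omega
  · obtain ⟨s, rfl⟩ : ∃ s, t₀ = s + 1 := ⟨t₀ - 1, by omega⟩
    have hsT : s < T := by omega
    obtain ⟨a, ha, b, hb, hab, hPs⟩ := hstep s hsT
    have hsmall : ∀ D ∈ P s, D.card < m := by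
      intro D hD
      by_contra h
      exact hmin s (by omega) ⟨by omega, D, hD, by omega⟩
    rw [hPs] at hCP
    rcases Finset.mem_insert.mp hCP with rfl | hC'
    · calc (a ∪ b).card ≤ a.card + b.card := Finset.card_union_le a b
        _ ≤ 2 * m := by
          have := hsmall a ha; have := hsmall b hb; omega
    · have : C ∈ P s := Finset.mem_of_mem_erase (Finset.mem_of_mem_erase hC')
      have := hsmall C this; omega
end

section
/- Let G = (V, E₁, E₂) be a double graph on vertex set [n]. If the jigsaw percolation process on G percolates (terminates with a single cluster containing all vertices), and n ≥ 2m for some m ≥ 1, then there exists a set A ⊆ [n] with m ≤ |A| ≤ 2m such that both induced graphs ([A], E₁ restricted to A) and ([A], E₂ restricted to A) are connected. -/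
/-- One step of the jigsaw percolation process: two distinct clusters `a, b` of the
partition `P` merge, provided some edge of each colour meets both of them. -/
def JigsawMerge {n : ℕ} (E1 E2 : Set (Sym2 (Fin n)))
    (P Q : Finset (Finset (Fin n))) : Prop :=
  ∃ a ∈ P, ∃ b ∈ P, a ≠ b ∧
    (∃ e1 ∈ E1, (∃ x ∈ a, x ∈ e1) ∧ (∃ y ∈ b, y ∈ e1)) ∧
    (∃ e2 ∈ E2, (∃ x ∈ a, x ∈ e2) ∧ (∃ y ∈ b, y ∈ e2)) ∧
    Q = insert (a ∪ b) ((P.erase a).erase b)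

/-- The double graph `([n], E1, E2)` percolates: starting from the partition into
singletons, some sequence of jigsaw merges ends with the single cluster `[n]`. -/
def JigsawPercolates (n : ℕ) (E1 E2 : Set (Sym2 (Fin n))) : Prop :=
  ∃ (T : ℕ) (P : ℕ → Finset (Finset (Fin n))),
    P 0 = Finset.univ.image (fun v => {v}) ∧
    (∀ t < T, JigsawMerge E1 E2 (P t) (P (t + 1))) ∧
    P T = {Finset.univ}

lemma induce_singleton_connected {V : Type*} (G : SimpleGraph V) (v : V) :
    (G.induce {v}).Connected := by
  haveI : Nonempty ({v} : Set V) := ⟨⟨v, rfl⟩⟩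
  refine ⟨?_⟩
  rintro ⟨a, ha⟩ ⟨b, hb⟩
  have : (⟨a, ha⟩ : ({v} : Set V)) = ⟨b, hb⟩ := Subtype.ext (ha.trans hb.symm)
  rw [this]

/-- The invariant maintained by the process. -/
def JigsawInv {n : ℕ} (E1 E2 : Set (Sym2 (Fin n))) (P : Finset (Finset (Fin n))) : Prop :=
  (∀ c ∈ P, ((SimpleGraph.fromEdgeSet E1).induce (c : Set (Fin n))).Connected ∧
    ((SimpleGraph.fromEdgeSet E2).induce (c : Set (Fin n))).Connected) ∧
  (∀ a ∈ P, ∀ b ∈ P, a ≠ b → Disjoint a b)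

lemma adj_of_meet {n : ℕ} {E : Set (Sym2 (Fin n))} {a b : Finset (Fin n)}
    (hd : Disjoint a b) (he : ∃ e ∈ E, (∃ x ∈ a, x ∈ e) ∧ (∃ y ∈ b, y ∈ e)) :
    ∃ x ∈ a, ∃ y ∈ b, (SimpleGraph.fromEdgeSet E).Adj x y := by
  obtain ⟨e, heE, ⟨x, hx, hxe⟩, ⟨y, hy, hye⟩⟩ := he
  have hxy : x ≠ y := fun hxy => (Finset.disjoint_left.mp hd hx) (hxy ▸ hy)
  have : e = s(x, y) := ((Sym2.mem_and_mem_iff hxy).mp ⟨hxe, hye⟩)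
  exact ⟨x, hx, y, hy, by rw [SimpleGraph.fromEdgeSet_adj]; exact ⟨this ▸ heE, hxy⟩⟩

lemma jigsawInv_step {n : ℕ} {E1 E2 : Set (Sym2 (Fin n))} {P Q : Finset (Finset (Fin n))}
    (hP : JigsawInv E1 E2 P) (hm : JigsawMerge E1 E2 P Q) : JigsawInv E1 E2 Q := by
  obtain ⟨a, ha, b, hb, hab, he1, he2, hQ⟩ := hm
  have hdab : Disjoint a b := hP.2 a ha b hb hab
  have hmemQ : ∀ c ∈ Q, c = a ∪ b ∨ (c ∈ P ∧ c ≠ a ∧ c ≠ b) := by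
    intro c hc
    rw [hQ, Finset.mem_insert, Finset.mem_erase, Finset.mem_erase] at hc
    tauto
  constructor
  · intro c hc
    rcases hmemQ c hc with rfl | ⟨hcP, -, -⟩
    · obtain ⟨x1, hx1, y1, hy1, hadj1⟩ := adj_of_meet hdab he1
      obtain ⟨x2, hx2, y2, hy2, hadj2⟩ := adj_of_meet hdab he2
      have hcoe : ((a ∪ b : Finset (Fin n)) : Set (Fin n)) = ↑a ∪ ↑b := Finset.coe_union a b
      rw [hcoe]
      exact ⟨SimpleGraph.connected_induce_union (hP.1 a ha).1.preconnected (hP.1 b hb).1.preconnected hx1 hy1 hadj1,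
        SimpleGraph.connected_induce_union (hP.1 a ha).2.preconnected (hP.1 b hb).2.preconnected hx2 hy2 hadj2⟩
    · exact hP.1 c hcP
  · intro c hc d hd hcd
    rcases hmemQ c hc with rfl | ⟨hcP, hca, hcb⟩ <;>
      rcases hmemQ d hd with rfl | ⟨hdP, hda, hdb⟩
    · exact absurd rfl hcd
    · exact Finset.disjoint_union_left.mpr
        ⟨hP.2 a ha d hdP (Ne.symm hda), hP.2 b hb d hdP (Ne.symm hdb)⟩
    · exact (Finset.disjoint_union_left.mpr
        ⟨hP.2 a ha c hcP (Ne.symm hca), hP.2 b hb c hcP (Ne.symm hcb)⟩).symm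
    · exact hP.2 c hcP d hdP hcd

theorem percolates_implies_doubly_connected_set (n m : ℕ) (hm : 1 ≤ m)
    (hn : 2 * m ≤ n) (E1 E2 : Set (Sym2 (Fin n)))
    (h : JigsawPercolates n E1 E2) :
    ∃ A : Finset (Fin n), m ≤ A.card ∧ A.card ≤ 2 * m ∧
      ((SimpleGraph.fromEdgeSet E1).induce (A : Set (Fin n))).Connected ∧
      ((SimpleGraph.fromEdgeSet E2).induce (A : Set (Fin n))).Connected := by
  obtain ⟨T, P, hP0, hstep, hPT⟩ := h
  -- the invariant holds at every time
  have hinv : ∀ t, t ≤ T → JigsawInv E1 E2 (P t) := by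
    intro t
    induction t with
    | zero =>
      intro _
      constructor
      · intro c hc
        rw [hP0, Finset.mem_image] at hc
        obtain ⟨v, -, rfl⟩ := hc
        have : (({v} : Finset (Fin n)) : Set (Fin n)) = {v} := Finset.coe_singleton v
        rw [this]
        exact ⟨induce_singleton_connected _ v, induce_singleton_connected _ v⟩
      · intro c hc d hd hcd
        rw [hP0, Finset.mem_image] at hc hd
        obtain ⟨v, -, rfl⟩ := hc
        obtain ⟨w, -, rfl⟩ := hd
        simp only [Finset.disjoint_singleton, ne_eq]
        intro hvw
        exact hcd (by rw [hvw])
    | succ t ih =>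
      intro ht
      exact jigsawInv_step (ih (Nat.le_of_succ_le ht)) (hstep t ht)
  -- the predicate: some cluster of size ≥ m exists
  classical
  set p : ℕ → Prop := fun t => ∃ c ∈ P t, m ≤ c.card with hp
  have hpT : p T := by
    refine ⟨Finset.univ, by rw [hPT]; exact Finset.mem_singleton_self _, ?_⟩
    rw [Finset.card_univ, Fintype.card_fin]
    omega
  have hpdec : ∀ t, Decidable (p t) := fun t => by
    unfold p; infer_instance
  have hex : ∃ t, p t := ⟨T, hpT⟩
  let t0 := @Nat.find p hpdec hex
  have ht0p : p t0 := @Nat.find_spec p hpdec hex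
  have ht0le : t0 ≤ T := @Nat.find_min' p hpdec hex T hpT
  obtain ⟨c, hcP, hcm⟩ := ht0p
  have hinvt0 := hinv t0 ht0le
  match ht0 : t0, ht0le, hcP, hinvt0 with
  | 0, _, hcP, hinvt0 =>
    rw [hP0, Finset.mem_image] at hcP
    obtain ⟨v, -, rfl⟩ := hcP
    refine ⟨{v}, hcm, ?_, (hinvt0.1 _ (by rw [hP0]; exact Finset.mem_image_of_mem _ (Finset.mem_univ v))).1,
      (hinvt0.1 _ (by rw [hP0]; exact Finset.mem_image_of_mem _ (Finset.mem_univ v))).2⟩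
    rw [Finset.card_singleton]; omega
  | t + 1, ht0le, hcP, hinvt0 =>
    have hnp : ¬ p t := @Nat.find_min p hpdec hex t (by omega)
    obtain ⟨a, ha, b, hb, hab, -, -, hQ⟩ := hstep t (by omega)
    rw [hQ, Finset.mem_insert] at hcP
    rcases hcP with rfl | hcP
    · have haC : a.card < m := by
        by_contra hc; exact hnp ⟨a, ha, by omega⟩
      have hbC : b.card < m := by
        by_contra hc; exact hnp ⟨b, hb, by omega⟩
      have hcard : (a ∪ b).card ≤ a.card + b.card := Finset.card_union_le a b
      refine ⟨a ∪ b, hcm, by omega, ?_, ?_⟩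
      · exact (hinvt0.1 _ (by rw [hQ]; exact Finset.mem_insert_self _ _)).1
      · exact (hinvt0.1 _ (by rw [hQ]; exact Finset.mem_insert_self _ _)).2
    · exact absurd ⟨c, (Finset.mem_of_mem_erase (Finset.mem_of_mem_erase hcP)), hcm⟩ hnp
end
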